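/- (Semigroup convergence implies functional-calculus convergence for bounded continuous functions) Let c ∈ ℝ, let H and H_k (k ∈ ℕ) be complex Hilbert spaces, and let ι_k : H_k → H be bounded operators such that π_k := ι_k* satisfies π_k ι_k = id_{H_k} and sup_k ‖π_k‖ < ∞. Let L_k (on H_k) and L (on H) be bounded self-adjoint operators whose spectra are contained in [c,∞). Assume that for every a ≥ 0 and every f ∈ H one has ι_k exp(−aL_k) π_k f → exp(−aL) f as k → ∞. Then for every bounded continuous function ψ : [c,∞) → ℂ and every f ∈ H one has ι_k ψ(L_k) π_k f → ψ(L) f as k → ∞. In particular, this applies to ψ(x) = exp(−itx) for any t ∈ ℝ, so ι_k exp(−itL_k) π_k → exp(−itL) strongly. -/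

import Mathlib

open Filter Topology ContinuousLinearMap

noncomputable section

/-- The continuous functional calculus `ψ(L)` of a self-adjoint bounded operator `L` (whose
spectrum is real) applied to a function `ψ` of a real variable, implemented via the
`ℂ`-functional calculus of the star-normal element `L`. -/
def cfcReal {H : Type*} [NormedAddCommGroup H] [InnerProductSpace ℂ H] [CompleteSpace H]
    (ψ : ℝ → ℂ) (L : H →L[ℂ] H) : H →L[ℂ] H :=
  cfc (fun z : ℂ => ψ z.re) L

section Aux

variable {W : Type*} [NormedAddCommGroup W] [InnerProductSpace ℂ W] [CompleteSpace W]

private lemma specRe {B : W →L[ℂ] W} (hB : IsSelfAdjoint B) {z : ℂ} (hz : z ∈ spectrum ℂ B) :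
    z.re ∈ spectrum ℝ B ∧ (z.re : ℂ) = z := by
  have h1 := hB.spectrumRestricts.apply_mem hz
  have h2 := hB.spectrumRestricts.rightInvOn hz
  exact ⟨by simpa using h1, by simpa using h2⟩

private lemma contOnSpec {c : ℝ} {ψ : ℝ → ℂ} (hψ : ContinuousOn ψ (Set.Ici c))
    {B : W →L[ℂ] W} (hB : IsSelfAdjoint B) (hspec : spectrum ℝ B ⊆ Set.Ici c) :
    ContinuousOn (fun z : ℂ => ψ z.re) (spectrum ℂ B) :=
  hψ.comp Complex.continuous_re.continuousOn fun z hz => hspec (specRe hB hz).1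

private lemma norm_cfcReal_le {c M : ℝ} {ψ : ℝ → ℂ} (hM : ∀ x ∈ Set.Ici c, ‖ψ x‖ ≤ M)
    (hM0 : 0 ≤ M) {B : W →L[ℂ] W} (hB : IsSelfAdjoint B)
    (hspec : spectrum ℝ B ⊆ Set.Ici c) :
    ‖cfcReal ψ B‖ ≤ M :=
  norm_cfc_le hM0 fun z hz => hM _ (hspec (specRe hB hz).1)

private lemma cfcReal_apply_le {c M : ℝ} {ψ : ℝ → ℂ} (hM : ∀ x ∈ Set.Ici c, ‖ψ x‖ ≤ M)
    (hM0 : 0 ≤ M) {B : W →L[ℂ] W} (hB : IsSelfAdjoint B)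
    (hspec : spectrum ℝ B ⊆ Set.Ici c) (v : W) :
    ‖cfcReal ψ B v‖ ≤ M * ‖v‖ :=
  ((cfcReal ψ B).le_opNorm v).trans
    (mul_le_mul_of_nonneg_right (norm_cfcReal_le hM hM0 hB hspec) (norm_nonneg v))

private lemma isStarNormal_smul {B : W →L[ℂ] W} (hB : IsSelfAdjoint B) (w : ℂ) :
    IsStarNormal (w • B) := by
  constructor
  rw [star_smul, hB.star_eq]
  exact ((Commute.refl B).smul_left (star w)).smul_right w

private lemma cfcReal_exp (w : ℂ) {B : W →L[ℂ] W} (hB : IsSelfAdjoint B) :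
    cfcReal (fun x : ℝ => Complex.exp (w * x)) B = NormedSpace.exp (w • B) := by
  have hn : IsStarNormal B := hB.isStarNormal
  have h1 : cfcReal (fun x : ℝ => Complex.exp (w * x)) B
      = cfc (fun z : ℂ => Complex.exp (w * z)) B := by
    unfold cfcReal
    apply cfc_congr
    intro z hz
    simp only
    rw [(specRe hB hz).2]
  rw [h1]
  have h2 : (fun z : ℂ => Complex.exp (w * z)) = Complex.exp ∘ (fun z : ℂ => w * z) := rfl
  rw [h2, cfc_comp Complex.exp (fun z : ℂ => w * z) B hn
      Complex.continuous_exp.continuousOn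
      ((continuous_const.mul continuous_id).continuousOn),
    cfc_const_mul_id w B hn,
    CFC.complex_exp_eq_normedSpace_exp (isStarNormal_smul hB w)]

private lemma cfcReal_mul' {c : ℝ} {ψ φ : ℝ → ℂ} (hψ : ContinuousOn ψ (Set.Ici c))
    (hφ : ContinuousOn φ (Set.Ici c)) {B : W →L[ℂ] W} (hB : IsSelfAdjoint B)
    (hspec : spectrum ℝ B ⊆ Set.Ici c) :
    cfcReal (fun x => ψ x * φ x) B = cfcReal ψ B * cfcReal φ B :=
  cfc_mul _ _ B (contOnSpec hψ hB hspec) (contOnSpec hφ hB hspec)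

private lemma cfcReal_sub' {c : ℝ} {ψ φ : ℝ → ℂ} (hψ : ContinuousOn ψ (Set.Ici c))
    (hφ : ContinuousOn φ (Set.Ici c)) {B : W →L[ℂ] W} (hB : IsSelfAdjoint B)
    (hspec : spectrum ℝ B ⊆ Set.Ici c) :
    cfcReal (fun x => ψ x - φ x) B = cfcReal ψ B - cfcReal φ B :=
  cfc_sub _ _ B (contOnSpec hψ hB hspec) (contOnSpec hφ hB hspec)

/-- The exponential function family `x ↦ exp (-a x)`. -/
private def Efun (a : ℝ) : ℝ → ℂ := fun x => Complex.exp ((-(a : ℂ)) * x)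

private lemma Efun_continuous (a : ℝ) : Continuous (Efun a) :=
  Complex.continuous_exp.comp (continuous_const.mul Complex.continuous_ofReal)

private lemma cfcReal_Efun (a : ℝ) {B : W →L[ℂ] W} (hB : IsSelfAdjoint B) :
    cfcReal (Efun a) B = NormedSpace.exp ((-(a : ℂ)) • B) :=
  cfcReal_exp (-(a : ℂ)) hB

private lemma cfcReal_Efun_zero {B : W →L[ℂ] W} (hB : IsSelfAdjoint B) :
    cfcReal (Efun 0) B = 1 := by
  rw [cfcReal_Efun 0 hB]
  simp [NormedSpace.exp_zero]

private lemma cfcReal_polysum (n : ℕ) (aco : ℕ → ℂ) (s : ℝ) {B : W →L[ℂ] W}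
    (hB : IsSelfAdjoint B) :
    cfcReal (fun x : ℝ => ∑ m ∈ Finset.range n, aco m * Efun ((m : ℝ) * s) x) B
      = ∑ m ∈ Finset.range n, aco m • cfcReal (Efun ((m : ℝ) * s)) B := by
  have hc : ∀ m : ℕ, ContinuousOn (fun z : ℂ => Efun ((m : ℝ) * s) z.re) (spectrum ℂ B) :=
    fun m => ((Efun_continuous _).comp Complex.continuous_re).continuousOn
  unfold cfcReal
  have h1 : (fun z : ℂ => ∑ m ∈ Finset.range n, aco m * Efun ((m : ℝ) * s) z.re)
      = (∑ m ∈ Finset.range n, fun z : ℂ => aco m * Efun ((m : ℝ) * s) z.re) := by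
    funext z
    simp
  rw [h1, cfc_sum (fun m => fun z : ℂ => aco m * Efun ((m : ℝ) * s) z.re) B (Finset.range n)
    (fun m _ => (continuous_const.mul
      ((Efun_continuous _).comp Complex.continuous_re)).continuousOn)]
  exact Finset.sum_congr rfl fun m _ => cfc_const_mul (aco m) _ B (hc m)

/-- Weierstrass approximation: a damped bounded continuous function on `[c, ∞)` is uniformly
approximated by finite linear combinations of decaying exponentials. -/
private lemma weier (c : ℝ) {ψ : ℝ → ℂ} (hψ : ContinuousOn ψ (Set.Ici c)) {M : ℝ}
    (hM : ∀ x ∈ Set.Ici c, ‖ψ x‖ ≤ M) {s : ℝ} (hs : 0 < s) {ε : ℝ} (hε : 0 < ε) :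
    ∃ (n : ℕ) (a : ℕ → ℂ), ∀ x ∈ Set.Ici c,
      ‖ψ x * Efun s x - ∑ m ∈ Finset.range n, a m * Efun ((m : ℝ) * s) x‖ ≤ ε := by
  set b := Real.exp (-(s * c)) with hb
  have hbpos : 0 < b := Real.exp_pos _
  set h : ℝ → ℂ := fun y => ψ (-Real.log y / s) * (y : ℂ) with hh
  have hM0 : 0 ≤ M := le_trans (norm_nonneg _) (hM c Set.self_mem_Ici)
  have hmap : ∀ y : ℝ, 0 < y → y ≤ b → -Real.log y / s ∈ Set.Ici c := by
    intro y hy hyb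
    have hl : Real.log y ≤ -(s * c) := by
      calc Real.log y ≤ Real.log b := Real.log_le_log hy hyb
        _ = -(s * c) := Real.log_exp _
    rw [Set.mem_Ici, le_div_iff₀ hs]
    nlinarith
  have hbnd : ∀ y ∈ Set.Icc (0 : ℝ) b, ‖h y‖ ≤ M * y := by
    intro y hy
    rcases eq_or_lt_of_le hy.1 with h0 | hpos
    · simp [hh, ← h0]
    · rw [hh]
      simp only
      rw [norm_mul, Complex.norm_real, Real.norm_eq_abs, abs_of_pos hpos]
      exact mul_le_mul_of_nonneg_right (hM _ (hmap y hpos hy.2)) (le_of_lt hpos)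
  have hcont : ContinuousOn h (Set.Icc 0 b) := by
    intro y hy
    rcases eq_or_lt_of_le hy.1 with h0 | hpos
    · have hzero : h y = 0 := by simp [hh, ← h0]
      rw [ContinuousWithinAt, hzero]
      refine squeeze_zero_norm' (a := fun y => M * y)
        (eventually_mem_nhdsWithin.mono hbnd) ?_
      have htd : Tendsto (fun y : ℝ => M * y) (𝓝 (0 : ℝ)) (𝓝 (M * 0)) :=
        (continuous_const.mul continuous_id).tendsto 0
      rw [← h0]
      simpa using htd.mono_left nhdsWithin_le_nhds
    · have hIoi : Set.Ioi (0 : ℝ) ∈ 𝓝 y := isOpen_Ioi.mem_nhds hpos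
      rw [← continuousWithinAt_inter hIoi]
      have hψc : ContinuousOn (fun y : ℝ => ψ (-Real.log y / s))
          (Set.Icc 0 b ∩ Set.Ioi 0) := by
        apply hψ.comp
        · exact ((Real.continuousOn_log.mono (by
            intro z hz
            simpa using ne_of_gt hz.2)).neg.div_const s)
        · intro z hz
          exact hmap z hz.2 hz.1.2
      exact ((hψc.continuousWithinAt ⟨hy, hpos⟩).mul
        Complex.continuous_ofReal.continuousAt.continuousWithinAt)
  obtain ⟨p, hp⟩ := exists_polynomial_near_of_continuousOn 0 b (fun y => (h y).re)
    (Complex.continuous_re.comp_continuousOn hcont) (ε / 2) (by positivity)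
  obtain ⟨q, hq⟩ := exists_polynomial_near_of_continuousOn 0 b (fun y => (h y).im)
    (Complex.continuous_im.comp_continuousOn hcont) (ε / 2) (by positivity)
  refine ⟨max p.natDegree q.natDegree + 1,
    fun m => (p.coeff m : ℂ) + Complex.I * (q.coeff m : ℂ), ?_⟩
  intro x hx
  set y := Real.exp (-(s * x)) with hy
  have hy0 : 0 < y := Real.exp_pos _
  have hyb : y ≤ b := by
    rw [hy, hb, Real.exp_le_exp]
    have := hx
    rw [Set.mem_Ici] at this
    nlinarith
  have hlog : -Real.log y / s = x := by
    rw [hy, Real.log_exp]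
    field_simp
  have hexp : Efun s x = (y : ℂ) := by
    rw [hy, Complex.ofReal_exp]
    unfold Efun
    congr 1
    push_cast
    ring
  have hterm : ∀ m : ℕ, Efun ((m : ℝ) * s) x = (y : ℂ) ^ m := by
    intro m
    rw [← hexp]
    unfold Efun
    rw [← Complex.exp_nat_mul]
    congr 1
    push_cast
    ring
  have hnp : p.natDegree < max p.natDegree q.natDegree + 1 := by omega
  have hnq : q.natDegree < max p.natDegree q.natDegree + 1 := by omega
  have hsum : ∑ m ∈ Finset.range (max p.natDegree q.natDegree + 1),
      ((p.coeff m : ℂ) + Complex.I * (q.coeff m : ℂ)) * (y : ℂ) ^ m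
      = ((p.eval y : ℝ) : ℂ) + Complex.I * ((q.eval y : ℝ) : ℂ) := by
    rw [Polynomial.eval_eq_sum_range' hnp, Polynomial.eval_eq_sum_range' hnq]
    push_cast
    rw [Finset.mul_sum, ← Finset.sum_add_distrib]
    apply Finset.sum_congr rfl
    intro m _
    ring
  have hval : ψ x * Efun s x = h y := by
    rw [hexp, hh]
    simp only
    rw [hlog]
  have h1 := hp y ⟨le_of_lt hy0, hyb⟩
  have h2 := hq y ⟨le_of_lt hy0, hyb⟩
  calc ‖ψ x * Efun s x - ∑ m ∈ Finset.range (max p.natDegree q.natDegree + 1),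
        ((p.coeff m : ℂ) + Complex.I * (q.coeff m : ℂ)) * Efun ((m : ℝ) * s) x‖
      = ‖h y - (((p.eval y : ℝ) : ℂ) + Complex.I * ((q.eval y : ℝ) : ℂ))‖ := by
        rw [hval, ← hsum]
        congr 2
        apply Finset.sum_congr rfl
        intro m _
        rw [hterm m]
    _ ≤ |(h y).re - p.eval y| + |(h y).im - q.eval y| := by
        have habs := Complex.norm_le_abs_re_add_abs_im
          (h y - (((p.eval y : ℝ) : ℂ) + Complex.I * ((q.eval y : ℝ) : ℂ)))
        simpa using habs
    _ ≤ ε := by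
        have e1 := abs_sub_comm ((h y).re) (Polynomial.eval y p)
        have e2 := abs_sub_comm ((h y).im) (Polynomial.eval y q)
        linarith

end Aux

set_option maxHeartbeats 2000000 in
/-- **Semigroup convergence implies functional-calculus convergence for bounded continuous
functions.** If `ι_k exp(-aL_k) π_k → exp(-aL)` strongly for all `a ≥ 0`, then
`ι_k ψ(L_k) π_k → ψ(L)` strongly for every bounded continuous `ψ : [c,∞) → ℂ`; in
particular `ι_k exp(-itL_k) π_k → exp(-itL)` strongly for every `t ∈ ℝ`. -/
theorem mosco_semigroup_to_boundedContinuous (c : ℝ)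
    {H : Type*} [NormedAddCommGroup H] [InnerProductSpace ℂ H] [CompleteSpace H]
    {Hk : ℕ → Type*} [∀ k, NormedAddCommGroup (Hk k)] [∀ k, InnerProductSpace ℂ (Hk k)]
    [∀ k, CompleteSpace (Hk k)]
    (ι : ∀ k, Hk k →L[ℂ] H)
    (hπι : ∀ k, (adjoint (ι k)).comp (ι k) = ContinuousLinearMap.id ℂ (Hk k))
    (hπbd : ∃ C : ℝ, ∀ k, ‖adjoint (ι k)‖ ≤ C)
    (Lk : ∀ k, Hk k →L[ℂ] Hk k) (L : H →L[ℂ] H)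
    (hLk_sa : ∀ k, IsSelfAdjoint (Lk k)) (hL_sa : IsSelfAdjoint L)
    (hLk_spec : ∀ k, spectrum ℝ (Lk k) ⊆ Set.Ici c) (hL_spec : spectrum ℝ L ⊆ Set.Ici c)
    (hsemigroup : ∀ a : ℝ, 0 ≤ a → ∀ f : H,
      Tendsto (fun k => ι k (NormedSpace.exp ((-(a : ℂ)) • Lk k) (adjoint (ι k) f)))
        atTop (𝓝 (NormedSpace.exp ((-(a : ℂ)) • L) f))) :
    (∀ ψ : ℝ → ℂ, ContinuousOn ψ (Set.Ici c) → (∃ M : ℝ, ∀ x ∈ Set.Ici c, ‖ψ x‖ ≤ M) →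
      ∀ f : H,
        Tendsto (fun k => ι k (cfcReal ψ (Lk k) (adjoint (ι k) f)))
          atTop (𝓝 (cfcReal ψ L f))) ∧
    (∀ t : ℝ, ∀ f : H,
      Tendsto (fun k => ι k (NormedSpace.exp ((-(Complex.I * (t : ℂ))) • Lk k)
          (adjoint (ι k) f)))
        atTop (𝓝 (NormedSpace.exp ((-(Complex.I * (t : ℂ))) • L) f))) := by
  classical
  -- π_k ι_k = 1 pointwise
  have hπι' : ∀ k (x : Hk k), adjoint (ι k) (ι k x) = x := by
    intro k x
    have := DFunLike.congr_fun (hπι k) x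
    simpa using this
  -- ι_k is isometric
  have hι_norm : ∀ k (x : Hk k), ‖ι k x‖ = ‖x‖ := by
    intro k x
    have h1 : inner ℂ (ι k x) (ι k x) = inner ℂ x x := by
      calc inner ℂ (ι k x) (ι k x)
          = inner ℂ (adjoint (ι k) (ι k x)) x :=
            (ContinuousLinearMap.adjoint_inner_left (ι k) x (ι k x)).symm
        _ = inner ℂ x x := by rw [hπι' k x]
    have h2 : ‖ι k x‖ ^ 2 = ‖x‖ ^ 2 := by
      rw [← inner_self_eq_norm_sq (𝕜 := ℂ), ← inner_self_eq_norm_sq (𝕜 := ℂ), h1]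
    nlinarith [norm_nonneg (ι k x), norm_nonneg x]
  -- π_k is a contraction
  have hπ_le : ∀ k (v : H), ‖adjoint (ι k) v‖ ≤ ‖v‖ := by
    intro k v
    have hop : ‖adjoint (ι k)‖ ≤ 1 := by
      rw [show ‖adjoint (ι k)‖ = ‖ι k‖ from
        (ContinuousLinearMap.adjoint : (Hk k →L[ℂ] H) ≃ₗᵢ⋆[ℂ] _).norm_map (ι k)]
      apply ContinuousLinearMap.opNorm_le_bound _ zero_le_one
      intro x
      rw [hι_norm k x, one_mul]
    calc ‖adjoint (ι k) v‖ ≤ ‖adjoint (ι k)‖ * ‖v‖ := le_opNorm _ _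
      _ ≤ 1 * ‖v‖ := mul_le_mul_of_nonneg_right hop (norm_nonneg v)
      _ = ‖v‖ := one_mul _
  -- semigroup convergence in cfc form
  have Econv : ∀ a : ℝ, 0 ≤ a → ∀ v : H,
      Tendsto (fun k => ι k (cfcReal (Efun a) (Lk k) (adjoint (ι k) v))) atTop
        (𝓝 (cfcReal (Efun a) L v)) := by
    intro a ha v
    have h1 : ∀ k, cfcReal (Efun a) (Lk k) = NormedSpace.exp ((-(a : ℂ)) • Lk k) :=
      fun k => cfcReal_Efun a (hLk_sa k)
    have h2 : cfcReal (Efun a) L = NormedSpace.exp ((-(a : ℂ)) • L) := cfcReal_Efun a hL_sa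
    simp only [h1, h2]
    exact hsemigroup a ha v
  have part1 : ∀ ψ : ℝ → ℂ, ContinuousOn ψ (Set.Ici c) →
      (∃ M : ℝ, ∀ x ∈ Set.Ici c, ‖ψ x‖ ≤ M) → ∀ f : H,
      Tendsto (fun k => ι k (cfcReal ψ (Lk k) (adjoint (ι k) f)))
        atTop (𝓝 (cfcReal ψ L f)) := by
    rintro ψ hψ ⟨M, hM⟩ f
    have hM0 : 0 ≤ M := le_trans (norm_nonneg _) (hM c Set.self_mem_Ici)
    rw [Metric.tendsto_atTop]
    intro ε hε
    set δ₁ := ε / (8 * (M + 1)) with hδ₁def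
    have hδ₁pos : 0 < δ₁ := by positivity
    set δ₂ := ε / (8 * (‖f‖ + 1)) with hδ₂def
    have hδ₂pos : 0 < δ₂ := by positivity
    -- choose the damping parameter s > 0
    have hFcont : Continuous (fun s : ℝ => NormedSpace.exp ((-(s : ℂ)) • L) f) := by
      apply Continuous.clm_apply ?_ continuous_const
      exact (continuous_iff_continuousAt.2 fun x =>
          (NormedSpace.exp_analytic (𝕂 := ℂ) x).continuousAt).comp
        ((Complex.continuous_ofReal.neg).smul continuous_const)
    have h0 : Tendsto (fun s : ℝ => NormedSpace.exp ((-(s : ℂ)) • L) f) (𝓝 0) (𝓝 f) := by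
      have := hFcont.tendsto 0
      simpa [NormedSpace.exp_zero] using this
    have hev : ∀ᶠ s : ℝ in 𝓝 0, dist (NormedSpace.exp ((-(s : ℂ)) • L) f) f < δ₁ :=
      Metric.tendsto_nhds.mp h0 δ₁ hδ₁pos
    obtain ⟨s, hs_pos, hs⟩ : ∃ s : ℝ, 0 < s ∧
        ‖NormedSpace.exp ((-(s : ℂ)) • L) f - f‖ < δ₁ := by
      obtain ⟨r, hr, hball⟩ := Metric.eventually_nhds_iff.mp hev
      refine ⟨r / 2, by positivity, ?_⟩
      have hd : dist (r / 2 : ℝ) 0 < r := by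
        rw [Real.dist_eq, sub_zero, abs_of_pos (by positivity : (0:ℝ) < r / 2)]
        linarith
      have := hball hd
      rwa [dist_eq_norm] at this
    set w := cfcReal (Efun s) L f with hwdef
    have hfw : ‖f - w‖ < δ₁ := by
      rw [norm_sub_rev, hwdef, cfcReal_Efun s hL_sa]
      exact hs
    -- uniform polynomial approximation of the damped function
    obtain ⟨n, aco, hg⟩ := weier c hψ hM hs_pos hδ₂pos
    set g : ℝ → ℂ := fun x => ∑ m ∈ Finset.range n, aco m * Efun ((m : ℝ) * s) x with hgdef
    have hgcont : ContinuousOn g (Set.Ici c) := by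
      rw [hgdef]
      exact (continuous_finset_sum _ fun m _ =>
        continuous_const.mul (Efun_continuous _)).continuousOn
    have hφcont : ContinuousOn (fun x => ψ x * Efun s x) (Set.Ici c) :=
      hψ.mul (Efun_continuous s).continuousOn
    -- convergence for g
    have hconvg : Tendsto (fun k => ι k (cfcReal g (Lk k) (adjoint (ι k) f)))
        atTop (𝓝 (cfcReal g L f)) := by
      have h1 : ∀ k, cfcReal g (Lk k)
          = ∑ m ∈ Finset.range n, aco m • cfcReal (Efun ((m : ℝ) * s)) (Lk k) := by
        intro k
        rw [hgdef]
        exact cfcReal_polysum n aco s (hLk_sa k)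
      have h2 : cfcReal g L = ∑ m ∈ Finset.range n, aco m • cfcReal (Efun ((m : ℝ) * s)) L := by
        rw [hgdef]
        exact cfcReal_polysum n aco s hL_sa
      simp only [h1, h2, ContinuousLinearMap.sum_apply, map_sum,
        ContinuousLinearMap.smul_apply, map_smul]
      exact tendsto_finset_sum _ fun m _ =>
        (Econv ((m : ℝ) * s) (by positivity) f).const_smul (aco m)
    -- the two eventual estimates
    have ev1 : ∀ᶠ k in atTop,
        ‖ι k (cfcReal g (Lk k) (adjoint (ι k) f)) - cfcReal g L f‖ < ε / 8 := by
      have := hconvg (Metric.ball_mem_nhds _ (by positivity : (0:ℝ) < ε / 8))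
      simpa [Metric.mem_ball, dist_eq_norm] using this
    have htend0 : Tendsto (fun k => ι k (adjoint (ι k) f)) atTop (𝓝 f) := by
      have h1 : ∀ k, cfcReal (Efun 0) (Lk k) = 1 := fun k => cfcReal_Efun_zero (hLk_sa k)
      have h2 : cfcReal (Efun 0) L = 1 := cfcReal_Efun_zero hL_sa
      have := Econv 0 le_rfl f
      simpa [h1, h2] using this
    have htends : Tendsto (fun k => ι k (adjoint (ι k) f)
        - ι k (cfcReal (Efun s) (Lk k) (adjoint (ι k) f))) atTop (𝓝 (f - w)) :=
      htend0.sub (Econv s (le_of_lt hs_pos) f)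
    have ev2 : ∀ᶠ k in atTop,
        ‖(ι k (adjoint (ι k) f) - ι k (cfcReal (Efun s) (Lk k) (adjoint (ι k) f)))
          - (f - w)‖ < δ₁ := by
      have := htends (Metric.ball_mem_nhds _ hδ₁pos)
      simpa [Metric.mem_ball, dist_eq_norm] using this
    -- numeric bounds
    have hb1 : M * δ₁ ≤ ε / 8 := by
      rw [hδ₁def, show M * (ε / (8 * (M + 1))) = M * ε / (8 * (M + 1)) from by ring,
        div_le_div_iff₀ (by positivity) (by norm_num : (0:ℝ) < 8)]
      nlinarith
    have hb2 : δ₂ * ‖f‖ ≤ ε / 8 := by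
      rw [hδ₂def, show ε / (8 * (‖f‖ + 1)) * ‖f‖ = ε * ‖f‖ / (8 * (‖f‖ + 1)) from by ring,
        div_le_div_iff₀ (by positivity) (by norm_num : (0:ℝ) < 8)]
      nlinarith [norm_nonneg f]
    rw [eventually_atTop] at ev1 ev2
    obtain ⟨N1, hN1⟩ := ev1
    obtain ⟨N2, hN2⟩ := ev2
    refine ⟨max N1 N2, fun k hk => ?_⟩
    have hk1 := hN1 k (le_trans (le_max_left _ _) hk)
    have hk2 := hN2 k (le_trans (le_max_right _ _) hk)
    rw [dist_eq_norm]
    -- abbreviations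
    set X := adjoint (ι k) f with hX
    -- operator decomposition identities
    have hidk : cfcReal ψ (Lk k) X = cfcReal (fun x => ψ x * Efun s x) (Lk k) X
        + cfcReal ψ (Lk k) (X - cfcReal (Efun s) (Lk k) X) := by
      rw [cfcReal_mul' hψ (Efun_continuous s).continuousOn (hLk_sa k) (hLk_spec k),
        ContinuousLinearMap.mul_apply, map_sub]
      abel
    have hidL : cfcReal ψ L f = cfcReal (fun x => ψ x * Efun s x) L f
        + cfcReal ψ L (f - cfcReal (Efun s) L f) := by
      rw [cfcReal_mul' hψ (Efun_continuous s).continuousOn hL_sa hL_spec,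
        ContinuousLinearMap.mul_apply, map_sub]
      abel
    -- bounds on ψ applied
    have hψLk := fun (v : Hk k) => cfcReal_apply_le hM hM0 (hLk_sa k) (hLk_spec k) v
    have hψL := fun (v : H) => cfcReal_apply_le hM hM0 hL_sa hL_spec v
    -- bound on the difference φ − g
    have hφg : ∀ x ∈ Set.Ici c, ‖(fun x => ψ x * Efun s x) x - g x‖ ≤ δ₂ := by
      intro x hx
      rw [hgdef]
      exact hg x hx
    have hdiffk : ∀ v : Hk k, ‖cfcReal (fun x => ψ x * Efun s x) (Lk k) v
        - cfcReal g (Lk k) v‖ ≤ δ₂ * ‖v‖ := by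
      intro v
      rw [← ContinuousLinearMap.sub_apply,
        ← cfcReal_sub' hφcont hgcont (hLk_sa k) (hLk_spec k)]
      exact cfcReal_apply_le hφg (le_of_lt hδ₂pos) (hLk_sa k) (hLk_spec k) v
    have hdiffL : ∀ v : H, ‖cfcReal (fun x => ψ x * Efun s x) L v
        - cfcReal g L v‖ ≤ δ₂ * ‖v‖ := by
      intro v
      rw [← ContinuousLinearMap.sub_apply, ← cfcReal_sub' hφcont hgcont hL_sa hL_spec]
      exact cfcReal_apply_le hφg (le_of_lt hδ₂pos) hL_sa hL_spec v
    -- assemble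
    have hXnorm : ‖X‖ ≤ ‖f‖ := hπ_le k f
    have hT2' : ‖X - cfcReal (Efun s) (Lk k) X‖ ≤ 2 * δ₁ := by
      have heq : ‖X - cfcReal (Efun s) (Lk k) X‖
          = ‖ι k (adjoint (ι k) f) - ι k (cfcReal (Efun s) (Lk k) (adjoint (ι k) f))‖ := by
        rw [← map_sub, hι_norm, hX]
      rw [heq]
      set u := ι k (adjoint (ι k) f) - ι k (cfcReal (Efun s) (Lk k) (adjoint (ι k) f)) with hu
      have hdecomp : u = (u - (f - w)) + (f - w) := by abel
      calc ‖u‖ = ‖(u - (f - w)) + (f - w)‖ := by rw [← hdecomp]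
        _ ≤ ‖u - (f - w)‖ + ‖f - w‖ := norm_add_le _ _
        _ ≤ 2 * δ₁ := by
            have h2' := le_of_lt hk2
            have h3' := le_of_lt hfw
            linarith
    have hA : ‖ι k (cfcReal (fun x => ψ x * Efun s x) (Lk k) X)
        - cfcReal (fun x => ψ x * Efun s x) L f‖ < δ₂ * ‖f‖ + ε / 8 + δ₂ * ‖f‖ := by
      have hdecomp : ι k (cfcReal (fun x => ψ x * Efun s x) (Lk k) X)
          - cfcReal (fun x => ψ x * Efun s x) L f
          = (ι k (cfcReal (fun x => ψ x * Efun s x) (Lk k) X) - ι k (cfcReal g (Lk k) X))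
            + (ι k (cfcReal g (Lk k) X) - cfcReal g L f)
            + (cfcReal g L f - cfcReal (fun x => ψ x * Efun s x) L f) := by abel
      rw [hdecomp]
      have hx1 : ‖ι k (cfcReal (fun x => ψ x * Efun s x) (Lk k) X)
          - ι k (cfcReal g (Lk k) X)‖ ≤ δ₂ * ‖f‖ := by
        rw [← map_sub, hι_norm]
        calc ‖cfcReal (fun x => ψ x * Efun s x) (Lk k) X - cfcReal g (Lk k) X‖
            ≤ δ₂ * ‖X‖ := hdiffk X
          _ ≤ δ₂ * ‖f‖ := mul_le_mul_of_nonneg_left hXnorm (le_of_lt hδ₂pos)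
      have hx3 : ‖cfcReal g L f - cfcReal (fun x => ψ x * Efun s x) L f‖ ≤ δ₂ * ‖f‖ := by
        rw [norm_sub_rev]
        exact hdiffL f
      calc ‖(ι k (cfcReal (fun x => ψ x * Efun s x) (Lk k) X) - ι k (cfcReal g (Lk k) X))
            + (ι k (cfcReal g (Lk k) X) - cfcReal g L f)
            + (cfcReal g L f - cfcReal (fun x => ψ x * Efun s x) L f)‖
          ≤ ‖ι k (cfcReal (fun x => ψ x * Efun s x) (Lk k) X) - ι k (cfcReal g (Lk k) X)‖
            + ‖ι k (cfcReal g (Lk k) X) - cfcReal g L f‖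
            + ‖cfcReal g L f - cfcReal (fun x => ψ x * Efun s x) L f‖ := norm_add₃_le
        _ < δ₂ * ‖f‖ + ε / 8 + δ₂ * ‖f‖ := by
            have := hk1
            have := hx1
            have := hx3
            linarith
    have hB : ‖ι k (cfcReal ψ (Lk k) (X - cfcReal (Efun s) (Lk k) X))‖ ≤ M * (2 * δ₁) := by
      rw [hι_norm]
      calc ‖cfcReal ψ (Lk k) (X - cfcReal (Efun s) (Lk k) X)‖
          ≤ M * ‖X - cfcReal (Efun s) (Lk k) X‖ := hψLk _
        _ ≤ M * (2 * δ₁) := mul_le_mul_of_nonneg_left hT2' hM0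
    have hC : ‖cfcReal ψ L (f - cfcReal (Efun s) L f)‖ ≤ M * δ₁ := by
      calc ‖cfcReal ψ L (f - cfcReal (Efun s) L f)‖
          ≤ M * ‖f - cfcReal (Efun s) L f‖ := hψL _
        _ ≤ M * δ₁ := mul_le_mul_of_nonneg_left (le_of_lt hfw) hM0
    calc ‖ι k (cfcReal ψ (Lk k) X) - cfcReal ψ L f‖
        = ‖(ι k (cfcReal (fun x => ψ x * Efun s x) (Lk k) X)
            - cfcReal (fun x => ψ x * Efun s x) L f)
          + ι k (cfcReal ψ (Lk k) (X - cfcReal (Efun s) (Lk k) X))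
          - cfcReal ψ L (f - cfcReal (Efun s) L f)‖ := by
          rw [hidk, hidL, map_add]
          congr 1
          abel
      _ ≤ ‖(ι k (cfcReal (fun x => ψ x * Efun s x) (Lk k) X)
            - cfcReal (fun x => ψ x * Efun s x) L f)
          + ι k (cfcReal ψ (Lk k) (X - cfcReal (Efun s) (Lk k) X))‖
          + ‖cfcReal ψ L (f - cfcReal (Efun s) L f)‖ := norm_sub_le _ _
      _ ≤ ‖ι k (cfcReal (fun x => ψ x * Efun s x) (Lk k) X)
            - cfcReal (fun x => ψ x * Efun s x) L f‖
          + ‖ι k (cfcReal ψ (Lk k) (X - cfcReal (Efun s) (Lk k) X))‖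
          + ‖cfcReal ψ L (f - cfcReal (Efun s) L f)‖ := by
          have := norm_add_le (ι k (cfcReal (fun x => ψ x * Efun s x) (Lk k) X)
            - cfcReal (fun x => ψ x * Efun s x) L f)
            (ι k (cfcReal ψ (Lk k) (X - cfcReal (Efun s) (Lk k) X)))
          linarith
      _ < ε := by
          have := hA
          have := hB
          have := hC
          linarith
  refine ⟨part1, ?_⟩
  intro t f
  have hψc : ContinuousOn (fun x : ℝ => Complex.exp ((-(Complex.I * (t : ℂ))) * x))
      (Set.Ici c) :=
    (Complex.continuous_exp.comp (continuous_const.mul Complex.continuous_ofReal)).continuousOn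
  have hψb : ∃ M : ℝ, ∀ x ∈ Set.Ici c,
      ‖Complex.exp ((-(Complex.I * (t : ℂ))) * x)‖ ≤ M := by
    refine ⟨1, fun x hx => ?_⟩
    rw [Complex.norm_exp]
    have hre : ((-(Complex.I * (t : ℂ))) * x).re = 0 := by
      simp [Complex.mul_re, Complex.mul_im]
    rw [hre, Real.exp_zero]
  have hmain := part1 _ hψc hψb f
  have hk : ∀ k, cfcReal (fun x : ℝ => Complex.exp ((-(Complex.I * (t : ℂ))) * x)) (Lk k)
      = NormedSpace.exp ((-(Complex.I * (t : ℂ))) • Lk k) :=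
    fun k => cfcReal_exp _ (hLk_sa k)
  have hL : cfcReal (fun x : ℝ => Complex.exp ((-(Complex.I * (t : ℂ))) * x)) L
      = NormedSpace.exp ((-(Complex.I * (t : ℂ))) • L) := cfcReal_exp _ hL_sa
  simpa only [hk, hL] using hmain
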